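/- Let n ≥ 3 and let G be the dihedral group of order 2^{n+1} (Mathlib's DihedralGroup (2^n)). Then G admits no simple virtual endomorphism of index 2: for every subgroup H of G of index 2 and every group homomorphism φ : H → G, there exists a nontrivial normal subgroup N of G contained in H with φ(x) ∈ N for all x ∈ N. -/

import Mathlib

private lemma zmod_two_torsion (n : ℕ) (hn : 1 ≤ n) (j : ZMod (2 ^ n))
    (h : j + j = 0) : j = 0 ∨ j = ((2 ^ (n - 1) : ℕ) : ZMod (2 ^ n)) := by
  haveI : NeZero (2 ^ n) := ⟨(Nat.pow_pos (n := n) (by norm_num)).ne'⟩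
  have hval : ((j.val + j.val : ℕ) : ZMod (2 ^ n)) = 0 := by
    push_cast
    rw [ZMod.natCast_val, ZMod.cast_id]
    exact h
  rw [ZMod.natCast_eq_zero_iff] at hval
  have hlt : j.val < 2 ^ n := ZMod.val_lt j
  have hpow : 2 ^ n = 2 ^ (n - 1) + 2 ^ (n - 1) := by
    rw [← two_mul, ← pow_succ']
    congr 1
    omega
  have hdvd : 2 ^ (n - 1) ∣ j.val := by
    have h2 : 2 * 2 ^ (n - 1) ∣ 2 * j.val := by
      rw [two_mul j.val, two_mul (2 ^ (n - 1)), ← hpow]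
      exact hval
    exact (mul_dvd_mul_iff_left (two_ne_zero)).mp h2
  rcases hdvd with ⟨c, hc⟩
  have hb : 0 < 2 ^ (n - 1) := Nat.pow_pos (by norm_num)
  have hlt2 : 2 ^ (n - 1) * c < 2 ^ (n - 1) * 2 := by
    rw [← hc]
    omega
  have hc2 : c < 2 := Nat.lt_of_mul_lt_mul_left hlt2
  interval_cases c
  · left
    rw [← ZMod.natCast_zmod_val j, hc, Nat.mul_zero, Nat.cast_zero]
  · right
    rw [← ZMod.natCast_zmod_val j, hc, Nat.mul_one]

/-- **Example (dihedral groups).**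
For `n ≥ 3`, the dihedral group `D_{2^n}` (of order `2^{n+1}`) admits no
simple virtual endomorphism of index `2`: for every subgroup `H` of index `2`
and every homomorphism `φ : H → D_{2^n}`, there is a nontrivial normal
subgroup `N` of `D_{2^n}` contained in `H` that is `φ`-invariant. -/
theorem dihedral_no_simple_virtual_endomorphism
    (n : ℕ) (hn : 3 ≤ n)
    (H : Subgroup (DihedralGroup (2 ^ n))) (hidx : H.index = 2)
    (φ : H →* DihedralGroup (2 ^ n)) :
    ∃ N : Subgroup (DihedralGroup (2 ^ n)), N ≠ ⊥ ∧ N.Normal ∧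
      ∃ hle : N ≤ H, ∀ x, ∀ hx : x ∈ N, φ ⟨x, hle hx⟩ ∈ N := by
  set G := DihedralGroup (2 ^ n)
  -- nat arithmetic
  have hnat1 : 2 ^ (n - 1) + 2 ^ (n - 1) = 2 ^ n := by
    have h' : n - 1 + 1 = n := by omega
    rw [← two_mul, ← pow_succ', h']
  have hnat2 : 2 ^ (n - 2) + 2 ^ (n - 2) = 2 ^ (n - 1) := by
    have h' : n - 2 + 1 = n - 1 := by omega
    rw [← two_mul, ← pow_succ', h']
  have hnat3 : 2 ^ (n - 3) + 2 ^ (n - 3) = 2 ^ (n - 2) := by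
    have h' : n - 3 + 1 = n - 2 := by omega
    rw [← two_mul, ← pow_succ', h']
  -- the central involution
  set z : G := DihedralGroup.r ((2 ^ (n - 1) : ℕ) : ZMod (2 ^ n)) with hz_def
  have hsum : ((2 ^ (n - 1) : ℕ) : ZMod (2 ^ n)) + ((2 ^ (n - 1) : ℕ) : ZMod (2 ^ n)) = 0 := by
    rw [← Nat.cast_add, hnat1, ZMod.natCast_self]
  have hz2 : z * z = 1 := by
    rw [hz_def, DihedralGroup.r_mul_r, hsum]
    rfl
  have hzne : z ≠ 1 := by
    rw [hz_def, DihedralGroup.one_def]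
    intro hc
    have h0 : ((2 ^ (n - 1) : ℕ) : ZMod (2 ^ n)) = 0 := by injection hc
    rw [ZMod.natCast_eq_zero_iff] at h0
    have hle' := Nat.le_of_dvd (Nat.pow_pos (by norm_num)) h0
    have h1 : 2 ^ (n - 1) < 2 ^ n := Nat.pow_lt_pow_right (by norm_num) (by omega)
    omega
  -- z is central
  have hcentral : ∀ g : G, g * z = z * g := by
    intro g
    cases g with
    | r i => rw [hz_def, DihedralGroup.r_mul_r, DihedralGroup.r_mul_r, add_comm]
    | sr i =>
        rw [hz_def, DihedralGroup.sr_mul_r, DihedralGroup.r_mul_sr]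
        congr 1
        rw [eq_sub_iff_add_eq, add_assoc, hsum, add_zero]
  have hzinv : z⁻¹ = z := by
    rw [inv_eq_iff_mul_eq_one]
    exact hz2
  -- the subgroup {1, z}
  refine ⟨{
    carrier := {1, z}
    one_mem' := Or.inl rfl
    mul_mem' := by
      rintro a b (rfl | rfl) (rfl | rfl)
      · exact Or.inl (one_mul 1)
      · exact Or.inr (one_mul z)
      · exact Or.inr (mul_one z)
      · exact Or.inl hz2
    inv_mem' := by
      rintro a (rfl | rfl)
      · exact Or.inl inv_one
      · exact Or.inr hzinv }, ?_, ?_, ?_⟩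
  · -- nontrivial
    intro hbot
    have hz_mem : z ∈ (⊥ : Subgroup G) := by
      rw [← hbot]
      exact Or.inr rfl
    exact hzne (Subgroup.mem_bot.mp hz_mem)
  · -- normal
    constructor
    rintro a (rfl | rfl) g
    · exact Or.inl (by group)
    · refine Or.inr ?_
      show g * z * g⁻¹ = z
      rw [hcentral g, mul_assoc, mul_inv_cancel, mul_one]
  · -- contained in H and φ-invariant
    have hsq : ∀ g : G, g * g ∈ H := fun g => Subgroup.mul_self_mem_of_index_two hidx g
    set u : G := DihedralGroup.r ((2 ^ (n - 2) : ℕ) : ZMod (2 ^ n)) with hu_def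
    have huu : u * u = z := by
      rw [hu_def, hz_def, DihedralGroup.r_mul_r, ← Nat.cast_add, hnat2]
    set v : G := DihedralGroup.r ((2 ^ (n - 3) : ℕ) : ZMod (2 ^ n)) with hv_def
    have hvv : v * v = u := by
      rw [hv_def, hu_def, DihedralGroup.r_mul_r, ← Nat.cast_add, hnat3]
    have huH : u ∈ H := hvv ▸ hsq v
    have hzH : z ∈ H := huu ▸ hsq u
    have hle : ({1, z} : Set G) ⊆ H := by
      rintro x (rfl | rfl)
      · exact H.one_mem
      · exact hzH
    refine ⟨hle, ?_⟩
    rintro x hx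
    rcases hx with rfl | rfl
    · -- x = 1
      show φ 1 ∈ _
      rw [map_one]
      exact Or.inl rfl
    · -- x = z
      show φ ⟨z, hzH⟩ ∈ _
      have hzH' : (⟨z, hzH⟩ : H) = ⟨u, huH⟩ * ⟨u, huH⟩ := by
        ext
        exact huu.symm
      have hz2' : (⟨z, hzH⟩ : H) * ⟨z, hzH⟩ = 1 := by
        ext
        exact hz2
      have himg : φ ⟨z, hzH⟩ = φ ⟨u, huH⟩ * φ ⟨u, huH⟩ := by
        rw [hzH', map_mul]
      have hord : φ ⟨z, hzH⟩ * φ ⟨z, hzH⟩ = 1 := by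
        rw [← map_mul, hz2', map_one]
      rw [himg] at hord ⊢
      cases hcase : φ (⟨u, huH⟩ : H) with
      | r i =>
          rw [hcase] at hord
          rw [DihedralGroup.r_mul_r, DihedralGroup.r_mul_r, DihedralGroup.one_def] at hord
          show DihedralGroup.r (i + i) ∈ _
          have h4 : (i + i) + (i + i) = 0 := by injection hord
          rcases zmod_two_torsion n (by omega) (i + i) h4 with h0 | h1
          · rw [h0]
            exact Or.inl rfl
          · rw [h1]
            exact Or.inr rfl
      | sr i =>
          show DihedralGroup.r (i - i) ∈ _
          rw [sub_self]
          exact Or.inl rfl
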